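/- With the deformed complex structure I_j^a = I_j - (a²V/(a²+V)) θ ⊗ I_j T + a² dx_j ⊗ T, if α is any (1,0)-form with respect to I_j, then Ψ_j = α - i a² α(T) dx_j is a (1,0)-form with respect to I_j^a. -/

import Mathlib

noncomputable section
open scoped RealInnerProductSpace

/-- The deformed (Taub-NUT) complex structure
`I_j^a = I_j - (a²V/(a²+V)) θ ⊗ I_j T + a² dx_j ⊗ T`, where `V = |T|⁻²`, `θ = g(T,·)`
and `dx_j(v) = -g(I_j T, v)` (i.e. `dx_j = -ι_T ω_j`). -/
def Jdeform {E : Type*} [NormedAddCommGroup E] [InnerProductSpace ℝ E]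
    (J : E →L[ℝ] E) (T : E) (a : ℝ) (v : E) : E :=
  J v - (((a ^ 2 * (‖T‖ ^ 2)⁻¹) / (a ^ 2 + (‖T‖ ^ 2)⁻¹)) * ⟪T, v⟫) • J T
    + (a ^ 2 * (-⟪J T, v⟫)) • T

/-- if `α` is a `(1,0)`-form for `I_j`, then `Ψ_j = α - i a² α(T) dx_j`
is a `(1,0)`-form for the deformed structure `I_j^a`, for every `a ≥ 0`. -/
theorem stmt5 {E : Type*} [NormedAddCommGroup E] [InnerProductSpace ℝ E]
    (J : E →L[ℝ] E)
    (hJ2 : ∀ v, J (J v) = -v)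
    (hskew : ∀ u v : E, ⟪J u, v⟫ = -⟪u, J v⟫)
    (T : E) (hT : T ≠ 0) (a : ℝ) (ha : 0 ≤ a)
    (α : E →L[ℝ] ℂ)
    -- α is of type (1,0) with respect to J
    (hα : ∀ v, α (J v) = Complex.I * α v) :
    ∀ v : E,
      (α (Jdeform J T a v)
          - Complex.I * (a ^ 2 : ℂ) * α T * ((-⟪J T, Jdeform J T a v⟫ : ℝ) : ℂ))
        = Complex.I *
          (α v - Complex.I * (a ^ 2 : ℂ) * α T * ((-⟪J T, v⟫ : ℝ) : ℂ)) := by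
  intro v
  have hn : (0:ℝ) < ‖T‖ ^ 2 := by
    have : ‖T‖ ≠ 0 := norm_ne_zero_iff.mpr hT
    positivity
  have hd : a ^ 2 + (‖T‖ ^ 2)⁻¹ ≠ 0 := by positivity
  have h1 : ⟪J T, J v⟫ = ⟪T, v⟫ := by rw [hskew, hJ2, inner_neg_right]; ring
  have h2 : ⟪J T, J T⟫ = ‖T‖ ^ 2 := by
    rw [hskew, hJ2, inner_neg_right, real_inner_self_eq_norm_sq]; ring
  have h3 : ⟪J T, T⟫ = 0 := by
    have h := hskew T T
    have h' := real_inner_comm T (J T)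
    linarith
  have hnC : ((‖T‖ : ℂ) ^ 2) ≠ 0 := by
    have : (‖T‖ : ℂ) ≠ 0 := by exact_mod_cast norm_ne_zero_iff.mpr hT
    exact pow_ne_zero 2 this
  have hdC : ((a : ℂ) ^ 2 + ((‖T‖ : ℂ) ^ 2)⁻¹) ≠ 0 := by
    have : ((a ^ 2 + (‖T‖ ^ 2)⁻¹ : ℝ) : ℂ) ≠ 0 := by exact_mod_cast hd
    push_cast at this
    convert this using 2
  simp only [Jdeform, map_sub, map_add, map_smul, inner_sub_right, inner_add_right,
    inner_smul_right, hα, h1, h2, h3, smul_eq_mul, Complex.real_smul]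
  have hC : (1 + (a : ℂ) ^ 2 * (‖T‖ : ℂ) ^ 2) ≠ 0 := by
    have : (0:ℝ) < 1 + a ^ 2 * ‖T‖ ^ 2 := by positivity
    have h' : ((1 + a ^ 2 * ‖T‖ ^ 2 : ℝ) : ℂ) ≠ 0 := by exact_mod_cast this.ne'
    push_cast at h'
    exact h'
  have hx : (1 + (a : ℂ) ^ 2 * (‖T‖ : ℂ) ^ 2) * (1 + (a : ℂ) ^ 2 * (‖T‖ : ℂ) ^ 2)⁻¹ = 1 :=
    mul_inv_cancel₀ hC
  push_cast
  have hTC : (‖T‖ : ℂ) ≠ 0 := by exact_mod_cast norm_ne_zero_iff.mpr hT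
  field_simp
  linear_combination (-(Complex.I * (a : ℂ) ^ 2 * ((⟪T, v⟫ : ℝ) : ℂ) * α T)) * hx +
    (-((a : ℂ) ^ 2 * α T * ((⟪J T, v⟫ : ℝ) : ℂ))) * Complex.I_sq
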